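/- Let χ be an (r+1)-signotope on [n] with block partition [n] = C₁ ∪ ... ∪ C_r and let O_χ be the induced grid orientation on C₁ × ... × C_r. Then every subgrid S = C₁' × ... × C_r' (with ∅ ≠ C_i' ⊆ C_i) contains at most one sink of the induced orientation. -/

import Mathlib

/-- Number of sign changes in a list of signs (`true` = `+`, `false` = `-`). -/
def signChanges (l : List Bool) : Nat :=
  (l.zip l.tail).countP (fun p => p.1 != p.2)

/-- The sequence of signs obtained from the set `A` by applying `χ` to `A` minus each of its
elements, deleted in increasing order. -/
def delSeq (chi : Finset Nat -> Bool) (A : Finset Nat) : List Bool :=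
  (List.range A.card).map (fun i => chi (((A.sort (fun a b => a <= b)).eraseIdx i).toFinset))

/-- `chi` is an `r`-signotope on ground set `S`: it is a sign map on `r`-subsets such that for
every `(r+1)`-subset `A ⊆ S` the sign sequence `delSeq chi A` has at most one sign change. -/
def IsSignotopeOn (r : Nat) (S : Finset Nat) (chi : Finset Nat -> Bool) : Prop :=
  forall A : Finset Nat, A ⊆ S -> A.card = r + 1 -> signChanges (delSeq chi A) <= 1
/-- `C 0, ..., C (r-1)` is a block partition of `[n] = {1, ..., n}`. -/
def IsBlockPartition (n r : Nat) (C : Fin r -> Finset Nat) : Prop :=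
  Finset.univ.biUnion C = Finset.Icc 1 n ∧
    ∀ i j : Fin r, i < j -> ∀ c ∈ C i, ∀ c' ∈ C j, c < c'

/-- The orientation `O_χ` induced by a block signotope: `blockDir chi C v w` means that both `v`
and `w` are grid vertices (of the grid `C 0 × ⋯ × C (r-1)`), they differ in exactly one
coordinate `i`, and the edge between them is directed from `v` to `w` according to the sign of
`chi` on the `(r+1)`-set consisting of all entries of `v` together with `w i`. -/
def blockDir {r : Nat} (chi : Finset Nat -> Bool) (C : Fin r -> Finset Nat)
    (v w : Fin r -> Nat) : Prop :=
  (∀ j, v j ∈ C j) ∧ (∀ j, w j ∈ C j) ∧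
    ∃ i, (∀ j, j ≠ i -> v j = w j) ∧
      ((v i < w i ∧ chi (insert (w i) (Finset.image v Finset.univ)) = true) ∨
       (w i < v i ∧ chi (insert (w i) (Finset.image v Finset.univ)) = false))

/-- Two tuples are adjacent in the grid iff they differ in exactly one coordinate. -/
def NatAdj {r : Nat} (v w : Fin r -> Nat) : Prop :=
  ∃ i, v i ≠ w i ∧ ∀ j, j ≠ i -> v j = w j

/-- `v` is a sink of the subgrid `S` of `O_χ`: all edges of the subgrid at `v` are incoming. -/
def IsBlockSink {r : Nat} (chi : Finset Nat -> Bool) (C : Fin r -> Finset Nat)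
    (S : Fin r -> Finset Nat) (v : Fin r -> Nat) : Prop :=
  (∀ i, v i ∈ S i) ∧ ∀ w, (∀ i, w i ∈ S i) -> NatAdj v w -> blockDir chi C w v


/-! ## Auxiliary lemmas -/



lemma signChanges_nil : signChanges [] = 0 := rfl
lemma signChanges_single (a : Bool) : signChanges [a] = 0 := rfl

lemma signChanges_cons_cons (x y : Bool) (t : List Bool) :
    signChanges (x :: y :: t) = (x != y).toNat + signChanges (y :: t) := by
  simp [signChanges, List.countP_cons]
  cases x <;> cases y <;> simp [Nat.add_comm]

lemma signChanges_le_cons (b : Bool) (l : List Bool) :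
    signChanges l ≤ signChanges (b :: l) := by
  cases l with
  | nil => simp [signChanges]
  | cons h t => rw [signChanges_cons_cons]; omega

lemma signChanges_triangle (x y : Bool) (l : List Bool) :
    signChanges (x :: l) ≤ (x != y).toNat + signChanges (y :: l) := by
  cases l with
  | nil => simp [signChanges]
  | cons h t =>
    rw [signChanges_cons_cons, signChanges_cons_cons]
    cases x <;> cases y <;> cases h <;> simp <;> omega

lemma signChanges_sublist : ∀ {l₁ l₂ : List Bool}, List.Sublist l₁ l₂ →
    signChanges l₁ ≤ signChanges l₂ ∧ ∀ x, signChanges (x :: l₁) ≤ signChanges (x :: l₂) := by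
  intro l₁ l₂ h
  induction h with
  | slnil => exact ⟨le_refl _, fun x => le_refl _⟩
  | @cons l₁ l₂ b h ih =>
    constructor
    · exact le_trans ih.1 (signChanges_le_cons b l₂)
    · intro x
      calc signChanges (x :: l₁) ≤ (x != b).toNat + signChanges (b :: l₁) :=
            signChanges_triangle x b l₁
        _ ≤ (x != b).toNat + signChanges (b :: l₂) := by have := ih.2 b; omega
        _ = signChanges (x :: b :: l₂) := (signChanges_cons_cons x b l₂).symm
  | @cons_cons l₁ l₂ a h ih =>
    constructor
    · exact ih.2 a
    · intro x
      rw [signChanges_cons_cons, signChanges_cons_cons]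
      have := ih.2 a; omega

/-! ### sublists of range -/

lemma single_sublist_range {a n : ℕ} (h : a < n) : List.Sublist [a] (List.range n) := by
  induction n with
  | zero => omega
  | succ m ih =>
    rw [List.range_succ]
    rcases Nat.lt_or_ge a m with h' | h'
    · exact (ih h').trans (List.sublist_append_left _ _)
    · have : a = m := by omega
      subst this
      simpa using List.Sublist.append (List.nil_sublist _) (List.Sublist.refl [a])

lemma pair_sublist_range {a b n : ℕ} (hab : a < b) (h : b < n) :
    List.Sublist [a, b] (List.range n) := by
  induction n with
  | zero => omega
  | succ m ih =>
    rw [List.range_succ]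
    rcases Nat.lt_or_ge b m with h' | h'
    · exact (ih h').trans (List.sublist_append_left _ _)
    · have : b = m := by omega
      subst this
      have : [a, b] = [a] ++ [b] := rfl
      rw [this]
      exact List.Sublist.append (single_sublist_range hab) (List.Sublist.refl [b])

lemma triple_sublist_range {a b c n : ℕ} (hab : a < b) (hbc : b < c) (h : c < n) :
    List.Sublist [a, b, c] (List.range n) := by
  induction n with
  | zero => omega
  | succ m ih =>
    rw [List.range_succ]
    rcases Nat.lt_or_ge c m with h' | h'
    · exact (ih h').trans (List.sublist_append_left _ _)
    · have : c = m := by omega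
      subst this
      have : [a, b, c] = [a, b] ++ [c] := rfl
      rw [this]
      exact List.Sublist.append (pair_sublist_range hab hbc) (List.Sublist.refl [c])

/-! ### eraseIdx and toFinset -/

lemma eraseIdx_toFinset : ∀ (l : List ℕ), l.Nodup → ∀ (i : ℕ) (h : i < l.length),
    (l.eraseIdx i).toFinset = l.toFinset.erase l[i] := by
  intro l
  induction l with
  | nil => intro _ i h; simp at h
  | cons a t ih =>
    intro hnd i h
    rcases List.nodup_cons.1 hnd with ⟨ha, hndt⟩
    cases i with
    | zero =>
      simp only [List.eraseIdx, List.getElem_cons_zero, List.toFinset_cons]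
      rw [Finset.erase_insert (by simpa using ha)]
    | succ j =>
      have hj : j < t.length := by simpa using h
      simp only [List.eraseIdx, List.toFinset_cons, List.getElem_cons_succ]
      rw [ih hndt j hj, Finset.erase_insert_of_ne]
      intro he
      exact ha (he ▸ List.getElem_mem hj)

lemma signChanges_pair_ne (a b c : Bool) (h1 : a ≠ b) (h2 : b ≠ c) :
    signChanges [a, b, c] = 2 := by
  cases a <;> cases b <;> cases c <;> simp_all [signChanges]

lemma indexOf_lt_indexOf {A : Finset ℕ} {a b : ℕ} (ha : a ∈ A) (hb : b ∈ A) (hab : a < b) :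
    (A.sort (fun a b => a <= b)).idxOf a < (A.sort (fun a b => a <= b)).idxOf b := by
  set L := A.sort (fun a b => a <= b) with hL
  have haL : a ∈ L := by rw [hL]; simpa using ha
  have hbL : b ∈ L := by rw [hL]; simpa using hb
  have hia : L.idxOf a < L.length := List.idxOf_lt_length_iff.2 haL
  have hib : L.idxOf b < L.length := List.idxOf_lt_length_iff.2 hbL
  have hsorted : L.SortedLT := Finset.sortedLT_sort A
  have hmono : StrictMono L.get := List.SortedLT.strictMono_get hsorted
  by_contra hcon
  push_neg at hcon
  rcases Nat.lt_or_ge (L.idxOf b) (L.idxOf a) with h' | h'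
  · have := hmono (a := ⟨L.idxOf b, hib⟩) (b := ⟨L.idxOf a, hia⟩) h'
    rw [List.idxOf_get, List.idxOf_get] at this
    omega
  · have : L.idxOf a = L.idxOf b := by omega
    have : a = b := by
      have h1 := List.idxOf_get (a := a) hia
      have h2 := List.idxOf_get (a := b) hib
      rw [← h1, ← h2]
      exact congrArg L.get (Fin.ext this)
    omega

lemma delSeq_entry (chi : Finset ℕ → Bool) (A : Finset ℕ) {x : ℕ} (hx : x ∈ A) :
    ∀ (h : (A.sort (fun a b => a <= b)).idxOf x < A.card),
    (delSeq chi A)[(A.sort (fun a b => a <= b)).idxOf x]'(by simpa [delSeq] using h)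
      = chi (A.erase x) := by
  intro h
  set L := A.sort (fun a b => a <= b) with hL
  have hlen : L.length = A.card := Finset.length_sort _
  have hxL : x ∈ L := by rw [hL]; simpa using hx
  have hi : L.idxOf x < L.length := List.idxOf_lt_length_iff.2 hxL
  simp only [delSeq, List.getElem_map, List.getElem_range]
  rw [eraseIdx_toFinset L (Finset.sort_nodup A _) _ hi]
  have hval : L[L.idxOf x] = x := List.getElem_idxOf hi
  have hfin : L.toFinset = A := by rw [hL]; exact Finset.sort_toFinset _ _
  rw [hval, hfin]

lemma key {n r : ℕ} {chi : Finset ℕ → Bool}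
    (hchi : IsSignotopeOn (r + 1) (Finset.Icc 1 n) chi)
    {A : Finset ℕ} (hA : A ⊆ Finset.Icc 1 n) (hcard : A.card = r + 2)
    {x y z : ℕ} (hx : x ∈ A) (hy : y ∈ A) (hz : z ∈ A) (hxy : x < y) (hyz : y < z)
    (hne : chi (A.erase x) ≠ chi (A.erase y)) : chi (A.erase y) = chi (A.erase z) := by
  by_contra hne2
  set L := A.sort (fun a b => a <= b) with hL
  have hlen : L.length = A.card := Finset.length_sort _
  have hix : L.idxOf x < L.length := List.idxOf_lt_length_iff.2 (by rw [hL]; simpa using hx)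
  have hiy : L.idxOf y < L.length := List.idxOf_lt_length_iff.2 (by rw [hL]; simpa using hy)
  have hiz : L.idxOf z < L.length := List.idxOf_lt_length_iff.2 (by rw [hL]; simpa using hz)
  have h1 : L.idxOf x < L.idxOf y := indexOf_lt_indexOf hx hy hxy
  have h2 : L.idxOf y < L.idxOf z := indexOf_lt_indexOf hy hz hyz
  -- the sublist
  have hsub : List.Sublist [L.idxOf x, L.idxOf y, L.idxOf z] (List.range A.card) :=
    triple_sublist_range h1 h2 (by omega)
  have hsub2 : List.Sublist
      ([L.idxOf x, L.idxOf y, L.idxOf z].map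
        (fun i => chi (((A.sort (fun a b => a <= b)).eraseIdx i).toFinset)))
      (delSeq chi A) := hsub.map _
  have hbound : signChanges
      ([L.idxOf x, L.idxOf y, L.idxOf z].map
        (fun i => chi (((A.sort (fun a b => a <= b)).eraseIdx i).toFinset))) ≤ 1 := by
    refine le_trans (signChanges_sublist hsub2).1 ?_
    exact hchi A hA (by omega)
  have e1 : chi (((A.sort (fun a b => a <= b)).eraseIdx (L.idxOf x)).toFinset)
      = chi (A.erase x) := by
    have := delSeq_entry chi A hx (by rw [← hL]; omega)
    simpa only [delSeq, List.getElem_map, List.getElem_range] using this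
  have e2 : chi (((A.sort (fun a b => a <= b)).eraseIdx (L.idxOf y)).toFinset)
      = chi (A.erase y) := by
    have := delSeq_entry chi A hy (by rw [← hL]; omega)
    simpa only [delSeq, List.getElem_map, List.getElem_range] using this
  have e3 : chi (((A.sort (fun a b => a <= b)).eraseIdx (L.idxOf z)).toFinset)
      = chi (A.erase z) := by
    have := delSeq_entry chi A hz (by rw [← hL]; omega)
    simpa only [delSeq, List.getElem_map, List.getElem_range] using this
  rw [List.map_cons, List.map_cons, List.map_cons, List.map_nil] at hbound
  rw [← hL] at e1 e2 e3
  rw [e1, e2, e3] at hbound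
  rw [signChanges_pair_ne _ _ _ hne hne2] at hbound
  omega

section Grid

variable {n r : ℕ} {chi : Finset ℕ → Bool} {C : Fin r → Finset ℕ}

lemma blocks_subset (hC : IsBlockPartition n r C) (i : Fin r) : C i ⊆ Finset.Icc 1 n := by
  intro a ha
  rw [← hC.1]
  exact Finset.mem_biUnion.2 ⟨i, Finset.mem_univ i, ha⟩

lemma blocks_ne (hC : IsBlockPartition n r C) {i j : Fin r} (hij : i ≠ j) {a b : ℕ}
    (ha : a ∈ C i) (hb : b ∈ C j) : a ≠ b := by
  rcases lt_or_gt_of_ne hij with h | h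
  · exact Nat.ne_of_lt (hC.2 i j h a ha b hb)
  · exact (Nat.ne_of_lt (hC.2 j i h b hb a ha)).symm

lemma vertex_inj (hC : IsBlockPartition n r C) {x : Fin r → ℕ} (hx : ∀ j, x j ∈ C j) :
    Function.Injective x := by
  intro i j hij
  by_contra hne
  exact blocks_ne hC hne (hx i) (hx j) hij

lemma image_update (hC : IsBlockPartition n r C) {x : Fin r → ℕ} (hx : ∀ j, x j ∈ C j)
    (j : Fin r) (a : ℕ) :
    Finset.image (Function.update x j a) Finset.univ
      = insert a ((Finset.image x Finset.univ).erase (x j)) := by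
  have hinj := vertex_inj hC hx
  ext t
  simp only [Finset.mem_image, Finset.mem_univ, true_and, Finset.mem_insert, Finset.mem_erase]
  constructor
  · rintro ⟨k, hk⟩
    by_cases hkj : k = j
    · subst hkj; rw [Function.update_self] at hk; exact Or.inl hk.symm
    · rw [Function.update_of_ne hkj] at hk
      refine Or.inr ⟨?_, ⟨k, hk⟩⟩
      rw [← hk]
      exact fun h => hkj (hinj h)
  · rintro (rfl | ⟨hne, ⟨k, hk⟩⟩)
    · exact ⟨j, Function.update_self _ _ _⟩
    · have hkj : k ≠ j := by rintro rfl; exact hne hk.symm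
      exact ⟨k, by rw [Function.update_of_ne hkj]; exact hk⟩

lemma insert_update_swap {x : Fin r → ℕ} (j : Fin r) (a b : ℕ) :
    insert a (Finset.image (Function.update x j b) Finset.univ)
      = insert b (Finset.image (Function.update x j a) Finset.univ) := by
  ext t
  simp only [Finset.mem_insert, Finset.mem_image, Finset.mem_univ, true_and]
  constructor <;>
  · rintro (rfl | ⟨k, hk⟩)
    · exact Or.inr ⟨j, Function.update_self _ _ _⟩
    · by_cases hkj : k = j
      · subst hkj; rw [Function.update_self] at hk; exact Or.inl hk.symm
      · rw [Function.update_of_ne hkj] at hk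
        exact Or.inr ⟨k, by rw [Function.update_of_ne hkj]; exact hk⟩

lemma not_mem_image (hC : IsBlockPartition n r C) {x : Fin r → ℕ} (hx : ∀ j, x j ∈ C j)
    {p : Fin r} {h₁ : ℕ} (h₁C : h₁ ∈ C p) (hne : h₁ ≠ x p) :
    h₁ ∉ Finset.image x Finset.univ := by
  intro hmem
  rcases Finset.mem_image.1 hmem with ⟨k, _, hk⟩
  by_cases hkp : k = p
  · subst hkp; exact hne hk.symm
  · exact blocks_ne hC (fun h => hkp h.symm) h₁C (hx k) hk.symm

/-- The crucial consequence of the signotope axiom for a pair of coordinates `p < t`. -/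
lemma rule (hchi : IsSignotopeOn (r + 1) (Finset.Icc 1 n) chi) (hC : IsBlockPartition n r C)
    {p t : Fin r} (hpt : p < t) {x : Fin r → ℕ} (hx : ∀ j, x j ∈ C j)
    {h₁ h₂ : ℕ} (h₁C : h₁ ∈ C p) (h₂C : h₂ ∈ C t) (hlt₁ : x p < h₁) (hlt₂ : x t < h₂)
    (hne : chi (insert h₁ (Finset.image (Function.update x t h₂) Finset.univ)) ≠
           chi (insert h₁ (Finset.image x Finset.univ))) :
    chi (insert h₂ (Finset.image x Finset.univ)) =
      chi (insert h₁ (Finset.image (Function.update x t h₂) Finset.univ)) := by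
  set im := Finset.image x Finset.univ with him
  set A := insert h₁ (insert h₂ im) with hA
  have hxp : x p ∈ C p := hx p
  have hxt : x t ∈ C t := hx t
  have h12 : h₁ < x t := hC.2 p t hpt h₁ h₁C (x t) hxt
  have h1ne2 : h₁ ≠ h₂ := blocks_ne hC (Fin.ne_of_lt hpt) h₁C h₂C
  have h₁notim : h₁ ∉ im := not_mem_image hC hx h₁C (by omega)
  have h₂notim : h₂ ∉ im := not_mem_image hC hx h₂C (by omega)
  have hxtim : x t ∈ im := Finset.mem_image.2 ⟨t, Finset.mem_univ t, rfl⟩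
  have hxtne1 : x t ≠ h₁ := by omega
  have hxtne2 : x t ≠ h₂ := by omega
  -- erase computations
  have hnm : h₁ ∉ insert h₂ im := by
    simp only [Finset.mem_insert]
    push_neg
    exact ⟨h1ne2, h₁notim⟩
  have E1 : A.erase h₁ = insert h₂ im := by
    rw [hA, Finset.erase_insert hnm]
  have E2 : A.erase h₂ = insert h₁ im := by
    rw [hA, Finset.erase_insert_of_ne h1ne2, Finset.erase_insert h₂notim]
  have E3 : A.erase (x t) = insert h₁ (Finset.image (Function.update x t h₂) Finset.univ) := by
    rw [image_update hC hx t h₂, hA, Finset.erase_insert_of_ne (Ne.symm hxtne1),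
      Finset.erase_insert_of_ne (Ne.symm hxtne2)]
  -- cardinality
  have hinj := vertex_inj hC hx
  have hcard : A.card = r + 2 := by
    rw [hA, Finset.card_insert_of_notMem hnm, Finset.card_insert_of_notMem h₂notim,
      Finset.card_image_of_injective _ hinj]
    simp
  have hsub : A ⊆ Finset.Icc 1 n := by
    rw [hA]
    intro a ha
    rcases Finset.mem_insert.1 ha with rfl | ha
    · exact blocks_subset hC p h₁C
    rcases Finset.mem_insert.1 ha with rfl | ha
    · exact blocks_subset hC t h₂C
    rcases Finset.mem_image.1 ha with ⟨k, _, rfl⟩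
    exact blocks_subset hC k (hx k)
  -- memberships
  have m1 : h₁ ∈ A := Finset.mem_insert_self _ _
  have m2 : h₂ ∈ A := Finset.mem_insert.2 (Or.inr (Finset.mem_insert_self _ _))
  have m3 : x t ∈ A := Finset.mem_insert.2 (Or.inr (Finset.mem_insert.2 (Or.inr hxtim)))
  by_contra hcon
  have hkey := key hchi hsub hcard m1 m3 m2 h12 hlt₂ (by rw [E1, E3]; exact hcon)
  rw [E3, E2] at hkey
  exact hne hkey

lemma sink_mono {S S' : Fin r → Finset ℕ} {v : Fin r → ℕ}
    (hv : IsBlockSink chi C S v) (hsub : ∀ i, S' i ⊆ S i) (hmem : ∀ i, v i ∈ S' i) :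
    IsBlockSink chi C S' v :=
  ⟨hmem, fun w hw adj => hv.2 w (fun i => hsub i (hw i)) adj⟩

lemma sink_edge {S : Fin r → Finset ℕ} {v : Fin r → ℕ}
    (hv : IsBlockSink chi C S v) {i : Fin r} {c : ℕ} (hc : c ∈ S i) (hne : c ≠ v i) :
    (c < v i → chi (insert (v i) (Finset.image (Function.update v i c) Finset.univ)) = true)
  ∧ (v i < c → chi (insert (v i) (Finset.image (Function.update v i c) Finset.univ)) = false)
    := by
  set w := Function.update v i c with hw
  have hwS : ∀ j, w j ∈ S j := by
    intro j
    by_cases hj : j = i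
    · subst hj; rw [hw, Function.update_self]; exact hc
    · rw [hw, Function.update_of_ne hj]; exact hv.1 j
  have hwi : w i = c := by rw [hw]; exact Function.update_self _ _ _
  have hadj : NatAdj v w := by
    refine ⟨i, ?_, fun j hj => (Function.update_of_ne hj c v).symm⟩
    rw [hwi]
    exact fun h => hne h.symm
  obtain ⟨-, -, i', hagree, hdisj⟩ := hv.2 w hwS hadj
  have hii' : i' = i := by
    by_contra hcon
    have : w i' = v i' := Function.update_of_ne hcon c v
    rcases hdisj with ⟨hlt, -⟩ | ⟨hlt, -⟩ <;> omega
  subst hii'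
  rw [hwi] at hdisj
  constructor
  · intro hlt
    rcases hdisj with ⟨-, h⟩ | ⟨h', -⟩
    · exact h
    · omega
  · intro hlt
    rcases hdisj with ⟨h', -⟩ | ⟨-, h⟩
    · omega
    · exact h

/-- The master lemma `F`. -/
lemma Fmaster (hchi : IsSignotopeOn (r + 1) (Finset.Icc 1 n) chi)
    (hC : IsBlockPartition n r C) :
    ∀ d : ℕ, ∀ S : Fin r → Finset ℕ, (∀ i, S i ⊆ C i) →
    ∀ v : Fin r → ℕ, IsBlockSink chi C S v → ∀ q : Fin r, ∀ c : ℕ, c ∈ S q → v q < c →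
    ∀ y : Fin r → ℕ, (∀ j, y j ∈ S j) → y q = v q → (∀ j, j < q → y j = v j) →
    (Finset.filter (fun j => y j ≠ v j) Finset.univ).card = d →
    chi (insert c (Finset.image y Finset.univ)) = false := by
  intro d
  induction d using Nat.strong_induction_on with
  | _ d IH =>
  intro S hSC v hv q c hcS hvc y hyS hyq hylow hcard
  by_contra hcon
  rw [Bool.not_eq_false] at hcon
  rename' hcon => hbad
  set DEV := Finset.filter (fun j => y j ≠ v j) Finset.univ with hDEV
  have hvS : ∀ j, v j ∈ S j := hv.1
  have hyC : ∀ j, y j ∈ C j := fun j => hSC j (hyS j)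
  have hvC : ∀ j, v j ∈ C j := fun j => hSC j (hvS j)
  rcases Nat.eq_zero_or_pos d with hd0 | hdpos
  · -- base case : y = v
    subst hd0
    have hempty : DEV = ∅ := Finset.card_eq_zero.1 hcard
    have hyv : y = v := by
      funext j
      by_contra hne
      have : j ∈ DEV := by rw [hDEV]; simp [hne]
      rw [hempty] at this
      exact absurd this (Finset.notMem_empty j)
    have hedge := (sink_edge hv hcS (by omega)).2 hvc
    rw [insert_update_swap q (v q) c, Function.update_eq_self] at hedge
    rw [hyv, hedge] at hbad
    simp at hbad
  -- inductive case
  have hDEVne : DEV.Nonempty := Finset.card_pos.1 (by omega)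
  -- every deviating coordinate is above q
  have hgt : ∀ s ∈ DEV, q < s := by
    intro s hs
    have hsne : y s ≠ v s := by
      rw [hDEV] at hs; exact (Finset.mem_filter.1 hs).2
    rcases lt_trichotomy s q with h | h | h
    · exact absurd (hylow s h) hsne
    · subst h; exact absurd hyq hsne
    · exact h
  -- the erase-filter identity
  have hfilter : ∀ (u w : Fin r → ℕ) (q' : Fin r), (∀ j, j ≠ q' → u j = y j) → u q' = v q' →
      (∀ j, w j = v j) →
      Finset.filter (fun j => u j ≠ w j) Finset.univ = DEV.erase q' := by
    intro u w q' hu huq hw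
    ext j
    simp only [hDEV, Finset.mem_filter, Finset.mem_univ, true_and, Finset.mem_erase]
    by_cases hj : j = q'
    · subst hj; simp [huq, hw j]
    · rw [hu j hj, hw j]
      simp [hj]
  -- the recorded edge facts
  have REC : ∀ s ∈ DEV,
      (v s < y s → chi (insert (y s)
        (Finset.image (Function.update y s (v s)) Finset.univ)) = true)
    ∧ (y s < v s → chi (insert (v s) (Finset.image y Finset.univ)) = false) := by
    intro s hs
    have hqs : q < s := hgt s hs
    have hsq : s ≠ q := (ne_of_lt hqs).symm
    set y' := Function.update y s (v s) with hy'
    have hy'S : ∀ j, y' j ∈ S j := by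
      intro j
      by_cases hj : j = s
      · subst hj; rw [hy', Function.update_self]; exact hvS j
      · rw [hy', Function.update_of_ne hj]; exact hyS j
    have hy'C : ∀ j, y' j ∈ C j := fun j => hSC j (hy'S j)
    have hy'q : y' q = v q := by rw [hy', Function.update_of_ne (Ne.symm hsq)]; exact hyq
    have hy's : y' s = v s := by rw [hy', Function.update_self]
    -- the inductive reset fact
    have hreset : chi (insert c (Finset.image y' Finset.univ)) = false := by
      refine IH (d - 1) (by omega) S hSC v hv q c hcS hvc y' hy'S hy'q ?_ ?_
      · intro j hj
        have hjs : j ≠ s := by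
          intro h; subst h; exact absurd hqs (by omega)
        rw [hy', Function.update_of_ne hjs]; exact hylow j hj
      · rw [hfilter y' v s (fun j hj => by rw [hy', Function.update_of_ne hj]) hy's
          (fun j => rfl)]
        rw [Finset.card_erase_of_mem hs, hcard]
    constructor
    · -- case A : v s < y s
      intro hlt
      have hupdate : Function.update y' s (y s) = y := by
        rw [hy']
        funext j
        by_cases hj : j = s
        · subst hj; rw [Function.update_self]
        · rw [Function.update_of_ne hj, Function.update_of_ne hj]
      have := rule hchi hC hqs hy'C (hSC q hcS) (hyC s)
        (by rw [hy'q]; exact hvc) (by rw [hy's]; exact hlt)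
        (by rw [hupdate, hbad, hreset]; decide)
      rw [hupdate, hbad] at this
      exact this
    · -- case B : y s < v s
      intro hlt
      have := rule hchi hC hqs hyC (hSC q hcS) (hvC s)
        (by rw [hyq]; exact hvc) hlt
        (by rw [← hy', hreset, hbad]; decide)
      rw [← hy', hreset] at this
      exact this
  -- the two-element subgrid
  set S2 : Fin r → Finset ℕ := fun j => insert (v j) {y j} with hS2
  have hS2S : ∀ i, S2 i ⊆ S i := by
    intro i a ha
    rcases Finset.mem_insert.1 ha with rfl | ha
    · exact hvS i
    · rw [Finset.mem_singleton.1 ha]; exact hyS i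
  have hS2C : ∀ i, S2 i ⊆ C i := fun i => (hS2S i).trans (hSC i)
  have hvS2 : ∀ i, v i ∈ S2 i := fun i => Finset.mem_insert_self _ _
  have hyS2 : ∀ i, y i ∈ S2 i := fun i =>
    Finset.mem_insert_of_mem (Finset.mem_singleton_self _)
  have hvsink2 : IsBlockSink chi C S2 v := sink_mono hv hS2S hvS2
  have hysink2 : IsBlockSink chi C S2 y := by
    refine ⟨hyS2, ?_⟩
    rintro w hw ⟨i, hnei, hagree⟩
    have hwv : w i = v i := by
      rcases Finset.mem_insert.1 (hw i) with h | h
      · exact h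
      · exact absurd (Finset.mem_singleton.1 h).symm hnei
    have hiDEV : i ∈ DEV := by
      rw [hDEV]
      simp only [Finset.mem_filter, Finset.mem_univ, true_and]
      rw [← hwv]
      exact hnei
    have hweq : w = Function.update y i (v i) := by
      funext j
      by_cases hj : j = i
      · subst hj; rw [Function.update_self, hwv]
      · rw [Function.update_of_ne hj]; exact (hagree j hj).symm
    refine ⟨?_, hyC, i, fun j hj => (hagree j hj).symm, ?_⟩
    · intro j
      by_cases hj : j = i
      · subst hj; rw [hwv]; exact hvC j
      · rw [(hagree j hj).symm]; exact hyC j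
    · rcases lt_trichotomy (v i) (y i) with hlt | heq | hlt
      · refine Or.inl ⟨by rw [hwv]; exact hlt, ?_⟩
        rw [hweq]
        exact (REC i hiDEV).1 hlt
      · exfalso
        rw [hDEV] at hiDEV
        exact (Finset.mem_filter.1 hiDEV).2 heq.symm
      · refine Or.inr ⟨by rw [hwv]; exact hlt, ?_⟩
        rw [hweq, insert_update_swap i (y i) (v i), Function.update_eq_self]
        exact (REC i hiDEV).2 hlt
  -- the minimal deviating coordinate
  have hq'DEV : DEV.min' hDEVne ∈ DEV := DEV.min'_mem hDEVne
  set q' := DEV.min' hDEVne with hq'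
  have hyvq' : y q' ≠ v q' := by
    rw [hDEV] at hq'DEV
    exact (Finset.mem_filter.1 hq'DEV).2
  have hbelow : ∀ j, j < q' → y j = v j := by
    intro j hj
    by_contra hne
    have hjDEV : j ∈ DEV := by
      rw [hDEV]; simp only [Finset.mem_filter, Finset.mem_univ, true_and]; exact hne
    exact absurd hj (not_lt.2 (Finset.min'_le DEV j hjDEV))
  rcases lt_trichotomy (v q') (y q') with hlt | heq | hlt
  · -- v q' < y q' : contradiction between IH applied to (S2, v) and REC
    have happ : chi (insert (y q')
        (Finset.image (Function.update y q' (v q')) Finset.univ)) = false := by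
      refine IH (d - 1) (by omega) S2 hS2C v hvsink2 q' (y q') (hyS2 q') hlt
        (Function.update y q' (v q')) ?_ ?_ ?_ ?_
      · intro j
        by_cases hj : j = q'
        · subst hj; rw [Function.update_self]; exact hvS2 _
        · rw [Function.update_of_ne hj]; exact hyS2 j
      · rw [Function.update_self]
      · intro j hj
        have hjq : j ≠ q' := ne_of_lt hj
        rw [Function.update_of_ne hjq]
        exact hbelow j hj
      · rw [hfilter (Function.update y q' (v q')) v q'
          (fun j hj => Function.update_of_ne hj _ _) (Function.update_self _ _ _)
          (fun j => rfl)]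
        rw [Finset.card_erase_of_mem hq'DEV, hcard]
    have hrec := (REC q' hq'DEV).1 hlt
    rw [happ] at hrec
    simp at hrec
  · exact hyvq' heq.symm
  · -- y q' < v q' : contradiction between IH applied to (S2, y) and v's sinkness
    have happ : chi (insert (v q')
        (Finset.image (Function.update v q' (y q')) Finset.univ)) = false := by
      refine IH (d - 1) (by omega) S2 hS2C y hysink2 q' (v q') (hvS2 q') hlt
        (Function.update v q' (y q')) ?_ ?_ ?_ ?_
      · intro j
        by_cases hj : j = q'
        · subst hj; rw [Function.update_self]; exact hyS2 _
        · rw [Function.update_of_ne hj]; exact hvS2 j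
      · rw [Function.update_self]
      · intro j hj
        have hjq : j ≠ q' := ne_of_lt hj
        rw [Function.update_of_ne hjq]
        exact (hbelow j hj).symm
      · have : Finset.filter
            (fun j => Function.update v q' (y q') j ≠ y j) Finset.univ = DEV.erase q' := by
          ext j
          simp only [hDEV, Finset.mem_filter, Finset.mem_univ, true_and, Finset.mem_erase]
          by_cases hj : j = q'
          · subst hj; simp [Function.update_self]
          · rw [Function.update_of_ne hj]
            simp [hj, ne_comm]
        rw [this, Finset.card_erase_of_mem hq'DEV, hcard]
    have hedge := (sink_edge hvsink2 (hyS2 q') (ne_of_lt hlt)).1 hlt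
    rw [happ] at hedge
    simp at hedge




end Grid

/-- every subgrid `S` (with `∅ ≠ S i ⊆ C i`) of the orientation `O_χ` induced by a
block signotope contains at most one sink. -/
theorem subgrid_at_most_one_sink (n r : Nat) (chi : Finset Nat -> Bool)
    (C : Fin r -> Finset Nat) (hchi : IsSignotopeOn (r + 1) (Finset.Icc 1 n) chi)
    (hC : IsBlockPartition n r C)
    (S : Fin r -> Finset Nat) (hS : ∀ i, S i ⊆ C i) (hne : ∀ i, (S i).Nonempty) :
    ∀ v w : Fin r -> Nat,
      IsBlockSink chi C S v -> IsBlockSink chi C S w -> v = w := by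
  intro v w hvsink hwsink
  by_contra hne
  have hDne : (Finset.filter (fun j => v j ≠ w j) Finset.univ).Nonempty := by
    by_contra h
    rw [Finset.not_nonempty_iff_eq_empty] at h
    apply hne
    funext j
    by_contra hj
    have hjD : j ∈ Finset.filter (fun j => v j ≠ w j) Finset.univ := by
      simp only [Finset.mem_filter, Finset.mem_univ, true_and]; exact hj
    rw [h] at hjD
    exact absurd hjD (Finset.notMem_empty j)
  set D := Finset.filter (fun j => v j ≠ w j) Finset.univ with hD
  have hqD : D.min' hDne ∈ D := D.min'_mem hDne
  set q := D.min' hDne with hq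
  have hvwq : v q ≠ w q := (Finset.mem_filter.1 hqD).2
  have hbelow : ∀ j, j < q → v j = w j := by
    intro j hj
    by_contra hne'
    have hjD : j ∈ D := by
      rw [hD]; simp only [Finset.mem_filter, Finset.mem_univ, true_and]; exact hne'
    exact absurd hj (not_lt.2 (Finset.min'_le D j hjD))
  rcases lt_or_gt_of_ne hvwq with hlt | hlt
  · -- v q < w q
    have happ : chi (insert (w q)
        (Finset.image (Function.update w q (v q)) Finset.univ)) = false := by
      refine Fmaster hchi hC ((D.erase q).card) S hS v hvsink q (w q) (hwsink.1 q) hlt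
        (Function.update w q (v q)) ?_ ?_ ?_ ?_
      · intro j
        by_cases hj : j = q
        · subst hj; rw [Function.update_self]; exact hvsink.1 _
        · rw [Function.update_of_ne hj]; exact hwsink.1 j
      · rw [Function.update_self]
      · intro j hj
        rw [Function.update_of_ne (ne_of_lt hj)]
        exact (hbelow j hj).symm
      · congr 1
        ext j
        simp only [hD, Finset.mem_filter, Finset.mem_univ, true_and, Finset.mem_erase]
        by_cases hj : j = q
        · subst hj; simp [Function.update_self]
        · rw [Function.update_of_ne hj]
          simp [hj, ne_comm]
    have hedge := (sink_edge hwsink (hvsink.1 q) hvwq).1 hlt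
    rw [happ] at hedge
    simp at hedge
  · -- w q < v q
    have happ : chi (insert (v q)
        (Finset.image (Function.update v q (w q)) Finset.univ)) = false := by
      refine Fmaster hchi hC ((D.erase q).card) S hS w hwsink q (v q) (hvsink.1 q) hlt
        (Function.update v q (w q)) ?_ ?_ ?_ ?_
      · intro j
        by_cases hj : j = q
        · subst hj; rw [Function.update_self]; exact hwsink.1 _
        · rw [Function.update_of_ne hj]; exact hvsink.1 j
      · rw [Function.update_self]
      · intro j hj
        rw [Function.update_of_ne (ne_of_lt hj)]
        exact hbelow j hj
      · congr 1
        ext j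
        simp only [hD, Finset.mem_filter, Finset.mem_univ, true_and, Finset.mem_erase]
        by_cases hj : j = q
        · subst hj; simp [Function.update_self]
        · rw [Function.update_of_ne hj]
          simp [hj]
    have hedge := (sink_edge hvsink (hwsink.1 q) hvwq.symm).1 hlt
    rw [happ] at hedge
    simp at hedge
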